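/- Conditional spin distribution of clusters under the Edwards–Sokal coupling (finite-graph version of the spin part of Propositions 3.2 and B): for every ω̃ ∈ {0,1}^E and every finite collection C_1, …, C_m of pairwise distinct clusters of ω̃ with chosen representatives v_j ∈ C_j, under P̂^{ES}_{J,H} conditioned on {ω|_E = ω̃} one has P̂^{ES}_{J,H}( σ_{v_j} = +1 for all j = 1,…,m | ω|_E = ω̃ ) = ∏_{j=1}^m [ tanh(H(C_j)) + (1 - tanh(H(C_j)))/2 ]; in particular the events {σ_{v_j} = +1} are (conditionally) mutually independent, and P̂^{ES}_{J,H}( σ_{v_j} = -1 | ω|_E = ω̃ ) = (1 - tanh(H(C_j)))/2. -/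

import Mathlib

open scoped Classical

namespace FK

variable {V : Type*} [Fintype V] [DecidableEq V]

/-- Internal bond configurations on the edge set `E`. -/
abbrev Config (E : Finset (Sym2 V)) : Type _ := {e : Sym2 V // e ∈ E} → Bool

/-- Full bond configurations: internal edges together with the ghost edges
(one for each vertex). -/
abbrev GConfig (E : Finset (Sym2 V)) : Type _ := Config E × (V → Bool)

/-- Two vertices are adjacent if they are distinct and joined by an open internal edge. -/
def adj (E : Finset (Sym2 V)) (ω : Config E) (u v : V) : Prop :=
  u ≠ v ∧ ∃ h : s(u, v) ∈ E, ω ⟨s(u, v), h⟩ = true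

/-- The same-cluster relation of an internal configuration. -/
def conn (E : Finset (Sym2 V)) (ω : Config E) (u v : V) : Prop :=
  Relation.ReflTransGen (adj E ω) u v

/-- The cluster of a vertex. -/
noncomputable def cluster (E : Finset (Sym2 V)) (ω : Config E) (v : V) : Finset V :=
  Finset.univ.filter (fun u => conn E ω v u)

/-- The set of clusters (connected components) of an internal configuration. -/
noncomputable def clusters (E : Finset (Sym2 V)) (ω : Config E) : Finset (Finset V) :=
  Finset.univ.image (cluster E ω)

/-- Adjacency in the extended graph, where `none` is the ghost vertex `g`. -/
def adjG (E : Finset (Sym2 V)) (ω : GConfig E) : Option V → Option V → Prop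
  | some u, some v => adj E ω.1 u v
  | some u, none => ω.2 u = true
  | none, some v => ω.2 v = true
  | none, none => False

/-- Connectivity in the extended graph (with the ghost vertex `none`). -/
def connG (E : Finset (Sym2 V)) (ω : GConfig E) (x y : Option V) : Prop :=
  Relation.ReflTransGen (adjG E ω) x y

/-- Number of connected components of the extended graph not containing the ghost. -/
noncomputable def kGhost (E : Finset (Sym2 V)) (ω : GConfig E) : ℕ :=
  (((Finset.univ : Finset V).filter (fun v => ¬ connG E ω (some v) none)).image
    (fun v => Finset.univ.filter (fun u : V => connG E ω (some v) (some u)))).card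

/-- The product over internal edges of the usual FK edge weights. -/
noncomputable def edgeWeight (J : Sym2 V → ℝ) (E : Finset (Sym2 V)) (ω : Config E) : ℝ :=
  ∏ e : {e : Sym2 V // e ∈ E},
    if ω e then 1 - Real.exp (-2 * J e.1) else Real.exp (-2 * J e.1)

/-- Unnormalized FK (q = 2) weight with ghost. -/
noncomputable def fkWeight (J : Sym2 V → ℝ) (H : V → ℝ) (E : Finset (Sym2 V))
    (ω : GConfig E) : ℝ :=
  2 ^ kGhost E ω * edgeWeight J E ω.1 *
    ∏ v, if ω.2 v then 1 - Real.exp (-2 * H v) else Real.exp (-2 * H v)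

/-- The FK (q = 2) random-cluster measure with ghost. -/
noncomputable def fkProb (J : Sym2 V → ℝ) (H : V → ℝ) (E : Finset (Sym2 V))
    (ω : GConfig E) : ℝ :=
  fkWeight J H E ω / ∑ ω' : GConfig E, fkWeight J H E ω'

/-- The marginal of the FK measure with ghost on the internal edges. -/
noncomputable def fkMarginal (J : Sym2 V → ℝ) (H : V → ℝ) (E : Finset (Sym2 V))
    (ωi : Config E) : ℝ :=
  ∑ ωg : V → Bool, fkProb J H E (ωi, ωg)

/-- Unnormalized zero-field random-cluster (q = 2) weight. -/
noncomputable def rcWeight (J : Sym2 V → ℝ) (E : Finset (Sym2 V)) (ω : Config E) : ℝ :=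
  2 ^ (clusters E ω).card * edgeWeight J E ω

/-- The zero-field random-cluster (q = 2) measure. -/
noncomputable def rcProb (J : Sym2 V → ℝ) (E : Finset (Sym2 V)) (ω : Config E) : ℝ :=
  rcWeight J E ω / ∑ ω' : Config E, rcWeight J E ω'

/-- The spin value (±1) of a Boolean. -/
def spin (b : Bool) : ℝ := if b then 1 else -1

/-- The product of the two spins at the endpoints of an (unordered) edge. -/
def pairSpin (σ : V → Bool) : Sym2 V → ℝ :=
  Sym2.lift ⟨fun u v => spin (σ u) * spin (σ v), fun u v => mul_comm _ _⟩

/-- Unnormalized Ising weight. -/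
noncomputable def isingWeight (J : Sym2 V → ℝ) (H : V → ℝ) (E : Finset (Sym2 V))
    (σ : V → Bool) : ℝ :=
  Real.exp ((∑ e ∈ E, J e * pairSpin σ e) + ∑ v, H v * spin (σ v))

/-- The Ising Gibbs measure. -/
noncomputable def isingProb (J : Sym2 V → ℝ) (H : V → ℝ) (E : Finset (Sym2 V))
    (σ : V → Bool) : ℝ :=
  isingWeight J H E σ / ∑ σ' : V → Bool, isingWeight J H E σ'

/-- Unnormalized Edwards–Sokal weight on pairs (spin configuration, bond configuration
with ghost); the ghost spin is `+1` (i.e. `true`). -/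
noncomputable def esWeight (J : Sym2 V → ℝ) (H : V → ℝ) (E : Finset (Sym2 V))
    (p : (V → Bool) × GConfig E) : ℝ :=
  (∏ e : {e : Sym2 V // e ∈ E},
      if p.2.1 e then
        (if ∀ u ∈ e.1, ∀ v ∈ e.1, p.1 u = p.1 v then 1 - Real.exp (-2 * J e.1) else 0)
      else Real.exp (-2 * J e.1))
  * ∏ v, if p.2.2 v then (if p.1 v = true then 1 - Real.exp (-2 * H v) else 0)
         else Real.exp (-2 * H v)

/-- The Edwards–Sokal coupling measure. -/
noncomputable def esProb (J : Sym2 V → ℝ) (H : V → ℝ) (E : Finset (Sym2 V))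
    (p : (V → Bool) × GConfig E) : ℝ :=
  esWeight J H E p / ∑ p' : (V → Bool) × GConfig E, esWeight J H E p'

end FK

section ESAux
open FK

variable {V : Type*} [Fintype V] [DecidableEq V]

private lemma sum_fn_bool_prod {ι : Type*} [Fintype ι] [DecidableEq ι] (g : ι → Bool → ℝ) :
    (∑ τ : ι → Bool, ∏ i, g i (τ i)) = ∏ i, (g i true + g i false) := by
  have h := Finset.prod_univ_sum (fun _ : ι => (Finset.univ : Finset Bool)) (fun i b => g i b)
  simp only [Fintype.piFinset_univ] at h
  rw [← h]
  exact Finset.prod_congr rfl fun i _ => by simp [Fintype.sum_bool]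

private lemma ite_irrel {P : Prop} {i1 i2 : Decidable P} (a b : ℝ) :
    @ite ℝ P i1 a b = @ite ℝ P i2 a b := by
  by_cases h : P
  · rw [if_pos h, if_pos h]
  · rw [if_neg h, if_neg h]

variable (E : Finset (Sym2 V)) (ωi : FK.Config E)

private lemma adj_symm : Symmetric (adj E ωi) := by
  intro u w h
  obtain ⟨hne, he, hω⟩ := h
  refine ⟨hne.symm, ?_⟩
  rw [Sym2.eq_swap]
  exact ⟨he, hω⟩

private lemma conn_equiv : Equivalence (conn E ωi) :=
  ⟨fun _ => Relation.ReflTransGen.refl,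
   fun h => by
     haveI : Std.Symm (adj E ωi) := ⟨fun _ _ h' => adj_symm E ωi h'⟩
     exact Std.Symm.symm (r := Relation.ReflTransGen (adj E ωi)) _ _ h,
   fun h h' => Relation.ReflTransGen.trans h h'⟩

/-- The setoid of connectivity. -/
private def st : Setoid V := ⟨conn E ωi, conn_equiv E ωi⟩

private abbrev Qt := Quotient (st E ωi)

noncomputable instance : Fintype (Qt E ωi) := Fintype.ofFinite _

private noncomputable def fib (q : Qt E ωi) : Finset V :=
  Finset.univ.filter (fun u => Quotient.mk (st E ωi) u = q)

private noncomputable def Fq (f : V → Bool → ℝ) (q : Qt E ωi) (b : Bool) : ℝ :=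
  ∏ u ∈ fib E ωi q, f u b

private def constOn (σ : V → Bool) : Prop := ∀ u w, conn E ωi u w → σ u = σ w

private lemma master (f : V → Bool → ℝ) :
    (∑ σ : V → Bool, (if constOn E ωi σ then (1:ℝ) else 0) * ∏ v, f v (σ v))
    = ∏ q : Qt E ωi, (Fq E ωi f q true + Fq E ωi f q false) := by
  classical
  have step1 : (∑ σ : V → Bool, (if constOn E ωi σ then (1:ℝ) else 0) * ∏ v, f v (σ v))
      = ∑ σ ∈ Finset.univ.filter (constOn E ωi), ∏ v, f v (σ v) := by
    rw [Finset.sum_filter]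
    exact Finset.sum_congr rfl fun σ _ => by split <;> simp
  rw [step1]
  have step2 : (∑ σ ∈ Finset.univ.filter (constOn E ωi), ∏ v, f v (σ v))
      = ∑ τ : Qt E ωi → Bool, ∏ v, f v (τ (Quotient.mk (st E ωi) v)) := by
    refine Finset.sum_bij'
      (fun σ hσ => fun q => Quotient.lift σ (by exact (Finset.mem_filter.mp hσ).2) q)
      (fun τ _ => fun u => τ (Quotient.mk (st E ωi) u)) ?_ ?_ ?_ ?_ ?_
    · intro σ hσ; exact Finset.mem_univ _
    · intro τ _
      refine Finset.mem_filter.mpr ⟨Finset.mem_univ _, fun u w h => ?_⟩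
      have : Quotient.mk (st E ωi) u = Quotient.mk (st E ωi) w := Quotient.sound (by exact h)
      simp only [this]
    · intro σ hσ; rfl
    · intro τ _; funext q; induction q using Quotient.ind; rfl
    · intro σ hσ; rfl
  rw [step2]
  have step3 : ∀ τ : Qt E ωi → Bool,
      (∏ v, f v (τ (Quotient.mk (st E ωi) v))) = ∏ q : Qt E ωi, Fq E ωi f q (τ q) := by
    intro τ
    rw [← Finset.prod_fiberwise_of_maps_to (g := Quotient.mk (st E ωi))
      (fun v _ => Finset.mem_univ _) (fun v => f v (τ (Quotient.mk (st E ωi) v)))]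
    refine Finset.prod_congr rfl fun q _ => ?_
    show _ = Fq E ωi f q (τ q)
    refine Finset.prod_congr rfl fun u hu => ?_
    rw [(Finset.mem_filter.mp hu).2]
  calc (∑ τ : Qt E ωi → Bool, ∏ v, f v (τ (Quotient.mk (st E ωi) v)))
      = ∑ τ : Qt E ωi → Bool, ∏ q : Qt E ωi, Fq E ωi f q (τ q) :=
        Finset.sum_congr rfl fun τ _ => step3 τ
    _ = _ := sum_fn_bool_prod _

private lemma constOn_iff (σ : V → Bool) :
    constOn E ωi σ ↔ ∀ e : {e : Sym2 V // e ∈ E}, ωi e = true →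
      ∀ u ∈ e.1, ∀ w ∈ e.1, σ u = σ w := by
  constructor
  · intro hc e hopen u hu w hw
    by_cases huw : u = w
    · rw [huw]
    · have hmm : e.1 = s(u, w) := (Sym2.mem_and_mem_iff huw).mp ⟨hu, hw⟩
      have hmem : s(u, w) ∈ E := hmm ▸ e.2
      refine hc u w (Relation.ReflTransGen.single ⟨huw, hmem, ?_⟩)
      have he : (⟨s(u, w), hmem⟩ : {e : Sym2 V // e ∈ E}) = e := Subtype.ext hmm.symm
      rw [he]; exact hopen
  · intro he u w h
    induction h with
    | refl => rfl
    | @tail b c _ hstep ih =>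
      obtain ⟨hne, hmem, hval⟩ := hstep
      rw [ih]
      exact he ⟨s(b, c), hmem⟩ hval b (Sym2.mem_mk_left _ _) c (Sym2.mem_mk_right _ _)

private lemma edge_factor (J : Sym2 V → ℝ) (σ : V → Bool) :
    (∏ e : {e : Sym2 V // e ∈ E},
        if ωi e then (if ∀ u ∈ e.1, ∀ w ∈ e.1, σ u = σ w then 1 - Real.exp (-2 * J e.1) else 0)
        else Real.exp (-2 * J e.1))
    = (if constOn E ωi σ then (1:ℝ) else 0) * edgeWeight J E ωi := by
  by_cases hc : constOn E ωi σ
  · rw [if_pos hc, one_mul, edgeWeight]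
    refine Finset.prod_congr rfl fun e _ => ?_
    by_cases hop : ωi e = true
    · rw [if_pos hop, if_pos hop, if_pos ((constOn_iff E ωi σ).mp hc e hop)]
    · rw [if_neg hop, if_neg hop]
  · rw [if_neg hc, zero_mul]
    rw [constOn_iff] at hc
    push_neg at hc
    obtain ⟨e, hopen, u, hu, w, hw, hne⟩ := hc
    refine Finset.prod_eq_zero (Finset.mem_univ e) ?_
    rw [if_pos hopen, if_neg (by push_neg; exact ⟨u, hu, w, hw, hne⟩)]

private lemma esWeight_sum_ghost (J : Sym2 V → ℝ) (H : V → ℝ) (σ : V → Bool) :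
    (∑ ωg : V → Bool, esWeight J H E (σ, (ωi, ωg)))
      = ((if constOn E ωi σ then (1:ℝ) else 0) * edgeWeight J E ωi) *
        ∏ u, (if σ u = true then (1:ℝ) else Real.exp (-2 * H u)) := by
  have step : (∑ ωg : V → Bool, esWeight J H E (σ, (ωi, ωg)))
      = ((if constOn E ωi σ then (1:ℝ) else 0) * edgeWeight J E ωi) *
        ∑ ωg : V → Bool, ∏ u, (fun (u : V) (b : Bool) =>
          if b then (if σ u = true then 1 - Real.exp (-2 * H u) else 0)
          else Real.exp (-2 * H u)) u (ωg u) := by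
    rw [Finset.mul_sum]
    refine Finset.sum_congr rfl fun ωg _ => ?_
    have hw : esWeight J H E (σ, (ωi, ωg))
        = (∏ e : {e : Sym2 V // e ∈ E},
            if ωi e then (if ∀ u ∈ e.1, ∀ w ∈ e.1, σ u = σ w then 1 - Real.exp (-2 * J e.1)
              else 0)
            else Real.exp (-2 * J e.1)) *
          ∏ u, (if ωg u then (if σ u = true then 1 - Real.exp (-2 * H u) else 0)
            else Real.exp (-2 * H u)) := rfl
    rw [hw, edge_factor E ωi J σ]
  rw [step, sum_fn_bool_prod (fun (u : V) (b : Bool) =>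
    if b then (if σ u = true then 1 - Real.exp (-2 * H u) else 0) else Real.exp (-2 * H u))]
  congr 1
  refine Finset.prod_congr rfl fun u _ => ?_
  by_cases hσ : σ u = true
  · simp [hσ]
  · simp [hσ]

private lemma ratio_helper {ι : Type*} [Fintype ι] [DecidableEq ι] (S : Finset ι) (a X : ι → ℝ)
    (hX : ∀ q, X q ≠ 0) :
    (∏ q : ι, (if q ∈ S then a q else X q)) / (∏ q : ι, X q) = ∏ q ∈ S, (a q / X q) := by
  have split : ∀ Y : ι → ℝ, (∏ q : ι, Y q) = (∏ q ∈ S, Y q) * ∏ q ∈ Sᶜ, Y q :=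
    fun Y => (Finset.prod_mul_prod_compl S Y).symm
  rw [split (fun q => if q ∈ S then a q else X q), split X]
  rw [Finset.prod_congr rfl (fun q hq => if_pos hq),
    Finset.prod_congr (rfl : Sᶜ = Sᶜ) (fun q hq => if_neg (Finset.mem_compl.mp hq))]
  rw [mul_div_mul_right _ _ (Finset.prod_ne_zero_iff.mpr fun q _ => hX q)]
  exact (Finset.prod_div_distrib _ _).symm

private lemma tanh_plus (h : ℝ) :
    Real.tanh h + (1 - Real.tanh h) / 2 = 1 / (1 + Real.exp (-2 * h)) := by
  have key : Real.exp h * Real.exp (-h) = 1 := by rw [← Real.exp_add]; simp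
  have hb : Real.exp (-2 * h) = Real.exp (-h) * Real.exp (-h) := by
    rw [← Real.exp_add]; ring_nf
  have h1 : Real.exp h + Real.exp (-h) > 0 := by positivity
  have h2 : (1:ℝ) + Real.exp (-h) * Real.exp (-h) > 0 := by positivity
  rw [Real.tanh_eq_sinh_div_cosh, Real.sinh_eq, Real.cosh_eq, hb]
  have hc : (Real.exp h - Real.exp (-h)) / 2 / ((Real.exp h + Real.exp (-h)) / 2)
      = (Real.exp h - Real.exp (-h)) / (Real.exp h + Real.exp (-h)) := by field_simp
  rw [hc]
  field_simp
  nlinarith [key]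

private lemma tanh_minus (h : ℝ) :
    (1 - Real.tanh h) / 2 = Real.exp (-2 * h) / (1 + Real.exp (-2 * h)) := by
  have key : Real.exp h * Real.exp (-h) = 1 := by rw [← Real.exp_add]; simp
  have hb : Real.exp (-2 * h) = Real.exp (-h) * Real.exp (-h) := by
    rw [← Real.exp_add]; ring_nf
  have h1 : Real.exp h + Real.exp (-h) > 0 := by positivity
  have h2 : (1:ℝ) + Real.exp (-h) * Real.exp (-h) > 0 := by positivity
  rw [Real.tanh_eq_sinh_div_cosh, Real.sinh_eq, Real.cosh_eq, hb]
  field_simp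
  nlinarith [key]

end ESAux

/-- conditional spin distribution of clusters under the Edwards–Sokal
coupling, and (conditional) mutual independence. -/
theorem edwards_sokal_conditional_spins
    {V : Type*} [Fintype V] [DecidableEq V]
    (E : Finset (Sym2 V)) (hE : ∀ e ∈ E, ¬ e.IsDiag)
    (J : Sym2 V → ℝ) (hJ : ∀ e ∈ E, 0 ≤ J e)
    (H : V → ℝ) (hH : ∀ v, 0 ≤ H v)
    (ωi : FK.Config E)
    (hpos : 0 < ∑ σ : V → Bool, ∑ ωg : V → Bool, FK.esProb J H E (σ, (ωi, ωg)))
    (m : ℕ) (C : Fin m → Finset V) (hinj : Function.Injective C)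
    (hC : ∀ j, C j ∈ FK.clusters E ωi)
    (v : Fin m → V) (hv : ∀ j, v j ∈ C j) :
    ((∑ σ : V → Bool, ∑ ωg : V → Bool,
        if ∀ j, σ (v j) = true then FK.esProb J H E (σ, (ωi, ωg)) else 0)
      / (∑ σ : V → Bool, ∑ ωg : V → Bool, FK.esProb J H E (σ, (ωi, ωg)))
    = ∏ j, (Real.tanh (∑ u ∈ C j, H u) + (1 - Real.tanh (∑ u ∈ C j, H u)) / 2)) ∧
    ∀ j,
      (∑ σ : V → Bool, ∑ ωg : V → Bool,
          if σ (v j) = false then FK.esProb J H E (σ, (ωi, ωg)) else 0)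
        / (∑ σ : V → Bool, ∑ ωg : V → Bool, FK.esProb J H E (σ, (ωi, ωg)))
      = (1 - Real.tanh (∑ u ∈ C j, H u)) / 2 := by
  classical
  set Z := ∑ p' : (V → Bool) × FK.GConfig E, FK.esWeight J H E p' with hZdef
  set c := FK.edgeWeight J E ωi with hcdef
  set k := c / Z with hkdef
  -- key reduction: ghost sum and edge factor
  have key : ∀ (φ : (V → Bool) → Prop),
      (∑ σ : V → Bool, ∑ ωg : V → Bool, if φ σ then FK.esProb J H E (σ, (ωi, ωg)) else 0)
      = k * ∑ σ : V → Bool, (if constOn E ωi σ then (1:ℝ) else 0) *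
          ((if φ σ then (1:ℝ) else 0) *
            ∏ u, (if σ u = true then (1:ℝ) else Real.exp (-2 * H u))) := by
    intro φ
    rw [Finset.mul_sum]
    refine Finset.sum_congr rfl fun σ _ => ?_
    by_cases hφ : φ σ
    · have h1 : (∑ ωg : V → Bool, if φ σ then FK.esProb J H E (σ, (ωi, ωg)) else 0)
          = ((if constOn E ωi σ then (1:ℝ) else 0) * c *
              ∏ u, (if σ u = true then (1:ℝ) else Real.exp (-2 * H u))) / Z := by
        calc (∑ ωg : V → Bool, if φ σ then FK.esProb J H E (σ, (ωi, ωg)) else 0)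
            = ∑ ωg : V → Bool, FK.esProb J H E (σ, (ωi, ωg)) :=
              Finset.sum_congr rfl fun ωg _ => if_pos hφ
          _ = ∑ ωg : V → Bool, FK.esWeight J H E (σ, (ωi, ωg)) / Z :=
              Finset.sum_congr rfl fun ωg _ => rfl
          _ = (∑ ωg : V → Bool, FK.esWeight J H E (σ, (ωi, ωg))) / Z :=
              (Finset.sum_div _ _ _).symm
          _ = _ := by rw [esWeight_sum_ghost E ωi J H σ]
      rw [h1, if_pos hφ, hkdef]
      ring
    · have h1 : (∑ ωg : V → Bool, if φ σ then FK.esProb J H E (σ, (ωi, ωg)) else 0) = 0 := by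
        simp [hφ]
      rw [h1, if_neg hφ]
      ring
  -- cluster and fiber identifications
  have hCluster : ∀ j, C j = FK.cluster E ωi (v j) := by
    intro j
    obtain ⟨w, -, hw⟩ := Finset.mem_image.mp (hC j)
    have hvj := hv j
    rw [← hw] at hvj ⊢
    have hconn : FK.conn E ωi w (v j) := (Finset.mem_filter.mp hvj).2
    ext u
    simp only [FK.cluster, Finset.mem_filter, Finset.mem_univ, true_and]
    exact ⟨fun h => (conn_equiv E ωi).trans ((conn_equiv E ωi).symm hconn) h,
           fun h => (conn_equiv E ωi).trans hconn h⟩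
  have hfib : ∀ j, fib E ωi (Quotient.mk (st E ωi) (v j)) = C j := by
    intro j
    rw [hCluster j]
    ext u
    simp only [fib, FK.cluster, Finset.mem_filter, Finset.mem_univ, true_and]
    constructor
    · intro h; exact (conn_equiv E ωi).symm (by exact Quotient.exact h)
    · intro h; exact Quotient.sound (by exact (conn_equiv E ωi).symm h)
  set S : Finset (Qt E ωi) :=
    Finset.image (fun j => Quotient.mk (st E ωi) (v j)) Finset.univ with hSdef
  have hSinj : ∀ x ∈ (Finset.univ : Finset (Fin m)), ∀ y ∈ (Finset.univ : Finset (Fin m)),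
      Quotient.mk (st E ωi) (v x) = Quotient.mk (st E ωi) (v y) → x = y := by
    intro x _ y _ h
    exact hinj (by rw [← hfib x, ← hfib y, h])
  -- per-cluster factors
  have hFfg : ∀ q : Qt E ωi,
      Fq E ωi (fun u b => if b then (1:ℝ) else Real.exp (-2 * H u)) q false
      = Real.exp (-2 * ∑ u ∈ fib E ωi q, H u) := by
    intro q
    show (∏ u ∈ fib E ωi q, if (false : Bool) then (1:ℝ) else Real.exp (-2 * H u)) = _
    rw [Finset.mul_sum, Real.exp_sum]
    exact Finset.prod_congr rfl fun u _ => by simp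
  have hFfgT : ∀ q : Qt E ωi,
      Fq E ωi (fun u b => if b then (1:ℝ) else Real.exp (-2 * H u)) q true = 1 :=
    fun q => Finset.prod_eq_one fun u _ => by simp
  -- positivity
  have hXpos : ∀ q : Qt E ωi, 0 < 1 + Real.exp (-2 * ∑ u ∈ fib E ωi q, H u) := by
    intro q; positivity
  have hP : 0 < ∏ q : Qt E ωi, (1 + Real.exp (-2 * ∑ u ∈ fib E ωi q, H u)) :=
    Finset.prod_pos fun q _ => hXpos q
  -- denominator formula
  have hden : (∑ σ : V → Bool, ∑ ωg : V → Bool, FK.esProb J H E (σ, (ωi, ωg)))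
      = k * ∏ q : Qt E ωi, (1 + Real.exp (-2 * ∑ u ∈ fib E ωi q, H u)) := by
    have kT := key (fun _ => True)
    simp only [if_true, one_mul] at kT
    rw [kT]
    congr 1
    exact (master E ωi (fun u b => if b then (1:ℝ) else Real.exp (-2 * H u))).trans
      (Finset.prod_congr rfl fun q _ => by rw [hFfg q, hFfgT q])
  have hk0 : 0 < k := by
    rw [hden] at hpos
    rcases mul_pos_iff.mp hpos with ⟨h1, _⟩ | ⟨_, h2⟩
    · exact h1
    · linarith
  constructor
  · -- part 1
    have hF1T : ∀ q : Qt E ωi,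
        Fq E ωi (fun u b => if (∃ j, v j = u) ∧ b = false then (0:ℝ)
          else (if b then (1:ℝ) else Real.exp (-2 * H u))) q true = 1 :=
      fun q => Finset.prod_eq_one fun u _ =>
        (if_neg (fun h => absurd h.2 (by simp))).trans (if_pos rfl)
    have hF1F : ∀ q : Qt E ωi,
        Fq E ωi (fun u b => if (∃ j, v j = u) ∧ b = false then (0:ℝ)
          else (if b then (1:ℝ) else Real.exp (-2 * H u))) q false
        = if q ∈ S then 0 else Real.exp (-2 * ∑ u ∈ fib E ωi q, H u) := by
      intro q
      by_cases hq : q ∈ S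
      · rw [if_pos hq]
        obtain ⟨j, -, hj⟩ := Finset.mem_image.mp hq
        have hmem : v j ∈ fib E ωi q := by
          simp only [fib, Finset.mem_filter, Finset.mem_univ, true_and]; exact hj
        exact Finset.prod_eq_zero hmem (if_pos ⟨⟨j, rfl⟩, rfl⟩)
      · rw [if_neg hq, ← hFfg q]
        refine Finset.prod_congr rfl fun u hu => ?_
        have hne : ¬ ((∃ j, v j = u) ∧ (false : Bool) = false) := by
          rintro ⟨⟨j, hj⟩, -⟩
          exact hq (Finset.mem_image.mpr ⟨j, Finset.mem_univ _,
            by rw [hj, (Finset.mem_filter.mp hu).2]⟩)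
        exact if_neg hne
    have hprod1 : ∀ (σ : V → Bool) (inst : Decidable (∀ j, σ (v j) = true)),
        ((@ite ℝ (∀ j, σ (v j) = true) inst 1 0) *
          ∏ u, (if σ u = true then (1:ℝ) else Real.exp (-2 * H u)))
        = ∏ u, (fun (u : V) (b : Bool) => if (∃ j, v j = u) ∧ b = false then (0:ℝ)
            else (if b then (1:ℝ) else Real.exp (-2 * H u))) u (σ u) := by
      intro σ inst
      by_cases hφ : ∀ j, σ (v j) = true
      · rw [if_pos hφ, one_mul]
        refine Finset.prod_congr rfl fun u _ => ?_
        have hne : ¬ ((∃ j, v j = u) ∧ σ u = false) := by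
          rintro ⟨⟨j, hj⟩, hb⟩
          rw [← hj, hφ j] at hb
          cases hb
        exact (if_neg hne).symm
      · rw [if_neg hφ, zero_mul]
        push_neg at hφ
        obtain ⟨j, hj⟩ := hφ
        have hjf : σ (v j) = false := by revert hj; cases σ (v j) <;> simp
        symm
        exact Finset.prod_eq_zero (Finset.mem_univ (v j)) (if_pos ⟨⟨j, rfl⟩, hjf⟩)
    have hnum1 : (∑ σ : V → Bool, ∑ ωg : V → Bool,
          if ∀ j, σ (v j) = true then FK.esProb J H E (σ, (ωi, ωg)) else 0)
        = k * ∏ q : Qt E ωi,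
            (if q ∈ S then (1:ℝ) else 1 + Real.exp (-2 * ∑ u ∈ fib E ωi q, H u)) := by
      refine Eq.trans ?_ ((key (fun σ => ∀ j, σ (v j) = true)).trans ?_)
      · exact Finset.sum_congr rfl fun σ _ => Finset.sum_congr rfl fun ωg _ => ite_irrel _ _
      · congr 1
        refine Eq.trans (Finset.sum_congr rfl fun σ _ => congrArg _ (hprod1 σ _))
          ((master E ωi (fun u b => if (∃ j, v j = u) ∧ b = false then (0:ℝ)
            else (if b then (1:ℝ) else Real.exp (-2 * H u)))).trans ?_)
        refine Finset.prod_congr rfl fun q _ => ?_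
        rw [hF1T q, hF1F q]
        by_cases hq : q ∈ S
        · rw [if_pos hq, if_pos hq, add_zero]
        · rw [if_neg hq, if_neg hq]
    rw [hnum1, hden, mul_div_mul_left _ _ (ne_of_gt hk0),
      ratio_helper S (fun _ => (1:ℝ))
        (fun q => 1 + Real.exp (-2 * ∑ u ∈ fib E ωi q, H u))
        (fun q => ne_of_gt (hXpos q)), hSdef,
      Finset.prod_image hSinj]
    refine Finset.prod_congr rfl fun j _ => ?_
    rw [tanh_plus (∑ u ∈ C j, H u), hfib j]
  · -- part 2
    intro j0
    have hF2T : ∀ q : Qt E ωi,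
        Fq E ωi (fun u b => if u = v j0 ∧ b = true then (0:ℝ)
          else (if b then (1:ℝ) else Real.exp (-2 * H u))) q true
        = if q = Quotient.mk (st E ωi) (v j0) then 0 else 1 := by
      intro q
      by_cases hq : q = Quotient.mk (st E ωi) (v j0)
      · rw [if_pos hq]
        have hmem : v j0 ∈ fib E ωi q := by
          simp only [fib, Finset.mem_filter, Finset.mem_univ, true_and]; exact hq.symm
        exact Finset.prod_eq_zero hmem (if_pos ⟨rfl, rfl⟩)
      · rw [if_neg hq]
        refine Finset.prod_eq_one fun u hu => ?_
        have hne : ¬ (u = v j0 ∧ (true : Bool) = true) := by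
          rintro ⟨hj, -⟩
          exact hq (by rw [← (Finset.mem_filter.mp hu).2, hj])
        exact (if_neg hne).trans (if_pos rfl)
    have hF2F : ∀ q : Qt E ωi,
        Fq E ωi (fun u b => if u = v j0 ∧ b = true then (0:ℝ)
          else (if b then (1:ℝ) else Real.exp (-2 * H u))) q false
        = Real.exp (-2 * ∑ u ∈ fib E ωi q, H u) := by
      intro q
      rw [← hFfg q]
      exact Finset.prod_congr rfl fun u _ =>
        if_neg (fun h => absurd h.2 (by simp))
    have hprod2 : ∀ (σ : V → Bool) (inst : Decidable (σ (v j0) = false)),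
        ((@ite ℝ (σ (v j0) = false) inst 1 0) *
          ∏ u, (if σ u = true then (1:ℝ) else Real.exp (-2 * H u)))
        = ∏ u, (fun (u : V) (b : Bool) => if u = v j0 ∧ b = true then (0:ℝ)
            else (if b then (1:ℝ) else Real.exp (-2 * H u))) u (σ u) := by
      intro σ inst
      by_cases hφ : σ (v j0) = false
      · rw [if_pos hφ, one_mul]
        refine Finset.prod_congr rfl fun u _ => ?_
        have hne : ¬ (u = v j0 ∧ σ u = true) := by
          rintro ⟨hj, hb⟩
          rw [hj, hφ] at hb
          cases hb
        exact (if_neg hne).symm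
      · rw [if_neg hφ, zero_mul]
        have hjt : σ (v j0) = true := by revert hφ; cases σ (v j0) <;> simp
        symm
        exact Finset.prod_eq_zero (Finset.mem_univ (v j0)) (if_pos ⟨rfl, hjt⟩)
    have hnum2 : (∑ σ : V → Bool, ∑ ωg : V → Bool,
          if σ (v j0) = false then FK.esProb J H E (σ, (ωi, ωg)) else 0)
        = k * ∏ q : Qt E ωi,
            (if q ∈ ({Quotient.mk (st E ωi) (v j0)} : Finset (Qt E ωi)) then
              Real.exp (-2 * ∑ u ∈ fib E ωi q, H u)
            else 1 + Real.exp (-2 * ∑ u ∈ fib E ωi q, H u)) := by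
      refine Eq.trans ?_ ((key (fun σ => σ (v j0) = false)).trans ?_)
      · exact Finset.sum_congr rfl fun σ _ => Finset.sum_congr rfl fun ωg _ => ite_irrel _ _
      · congr 1
        refine Eq.trans (Finset.sum_congr rfl fun σ _ => congrArg _ (hprod2 σ _))
          ((master E ωi (fun u b => if u = v j0 ∧ b = true then (0:ℝ)
            else (if b then (1:ℝ) else Real.exp (-2 * H u)))).trans ?_)
        refine Finset.prod_congr rfl fun q _ => ?_
        rw [hF2T q, hF2F q]
        by_cases hq : q = Quotient.mk (st E ωi) (v j0)
        · rw [if_pos hq, if_pos (Finset.mem_singleton.mpr hq), zero_add]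
        · rw [if_neg hq, if_neg (fun h => hq (Finset.mem_singleton.mp h))]
    rw [hnum2, hden, mul_div_mul_left _ _ (ne_of_gt hk0),
      ratio_helper ({Quotient.mk (st E ωi) (v j0)} : Finset (Qt E ωi))
        (fun q => Real.exp (-2 * ∑ u ∈ fib E ωi q, H u))
        (fun q => 1 + Real.exp (-2 * ∑ u ∈ fib E ωi q, H u))
        (fun q => ne_of_gt (hXpos q)),
      Finset.prod_singleton]
    rw [tanh_minus (∑ u ∈ C j0, H u), hfib j0]
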